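/- Let σ²(t) be regularly varying at infinity with index 2α, where α ∈ (0,1), and twice continuously differentiable with ultimately monotone derivatives. Then for c > 0, the function t ↦ (1+ct)/σ(ut) · u, for u large, attains its infimum over t > 0 at a point t_u which converges to t* = α/(c(1−α)) as u → ∞. -/

import Mathlib

open Set Filter

/-- Ultimately monotone at infinity. -/
def UltimatelyMonotone (g : ℝ → ℝ) : Prop :=
  ∃ A : ℝ, MonotoneOn g (Set.Ici A) ∨ AntitoneOn g (Set.Ici A)

lemma aux_sq_rpow (α : ℝ) {y : ℝ} (hy : 0 ≤ y) : y ^ (2*α) = (y ^ α)^2 := by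
  rw [mul_comm, Real.rpow_mul hy, ← Real.rpow_natCast (y ^ α) 2]
  norm_num

lemma aux_key (σ2 : ℝ → ℝ) (c u a b : ℝ) (hc : 0 < c) (hu : 0 < u) (ha : 0 < a) (hb : 0 < b)
    (hσa : 0 < σ2 (u*a)) (hσb : 0 < σ2 (u*b))
    (h : u * (1 + c*a) / Real.sqrt (σ2 (u*a)) ≤ u * (1 + c*b) / Real.sqrt (σ2 (u*b))) :
    (1 + c*a)^2 * σ2 (u*b) ≤ (1 + c*b)^2 * σ2 (u*a) := by
  have hsa := Real.sqrt_pos.mpr hσa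
  have hsb := Real.sqrt_pos.mpr hσb
  rw [div_le_div_iff₀ hsa hsb] at h
  have ha' : (0:ℝ) ≤ 1 + c*a := by positivity
  have hb' : (0:ℝ) ≤ 1 + c*b := by positivity
  have h2 : (1 + c*a) * Real.sqrt (σ2 (u*b)) ≤ (1 + c*b) * Real.sqrt (σ2 (u*a)) := by
    nlinarith [h, hu]
  have e1 : Real.sqrt (σ2 (u*b)) * Real.sqrt (σ2 (u*b)) = σ2 (u*b) := Real.mul_self_sqrt hσb.le
  have e2 : Real.sqrt (σ2 (u*a)) * Real.sqrt (σ2 (u*a)) = σ2 (u*a) := Real.mul_self_sqrt hσa.le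
  nlinarith [mul_self_le_mul_self (by positivity : (0:ℝ) ≤ (1 + c*a) * Real.sqrt (σ2 (u*b))) h2]

lemma aux_ratio (σ2 : ℝ → ℝ) (α : ℝ)
    (hpos : ∀ t : ℝ, 0 < t → 0 < σ2 t)
    (hRV : ∀ t : ℝ, 0 < t →
      Tendsto (fun u => σ2 (u * t) / σ2 u) atTop (nhds (t ^ (2 * α))))
    (p q : ℝ) (hp : 0 < p) (hq : 0 < q) :
    Tendsto (fun u => σ2 (u*p) / σ2 (u*q)) atTop (nhds ((p/q) ^ (2*α))) := by
  have hq0 : (q:ℝ) ^ (2*α) ≠ 0 := ne_of_gt (Real.rpow_pos_of_pos hq _)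
  have h := (hRV p hp).div (hRV q hq) hq0
  rw [← Real.div_rpow hp.le hq.le] at h
  refine h.congr' ?_
  filter_upwards [eventually_gt_atTop 0] with u hu
  have h1 : σ2 u ≠ 0 := ne_of_gt (hpos u hu)
  have h2 : σ2 (u*q) ≠ 0 := ne_of_gt (hpos _ (by positivity))
  simp only [Pi.div_apply]
  field_simp

lemma aux_mono (σ2 : ℝ → ℝ) (α : ℝ) (hα : 0 < α)
    (hpos : ∀ t : ℝ, 0 < t → 0 < σ2 t)
    (hRV2 : Tendsto (fun u => σ2 (u*2) / σ2 u) atTop (nhds ((2:ℝ) ^ (2*α))))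
    (hC2 : ContDiffOn ℝ 2 σ2 (Set.Ioi 0))
    (hmon1 : UltimatelyMonotone (deriv σ2)) :
    ∃ A, 1 ≤ A ∧ MonotoneOn σ2 (Set.Ici A) := by
  have hdiff : ∀ x ∈ Set.Ioi (0:ℝ), DifferentiableAt ℝ σ2 x := fun x hx =>
    (hC2.differentiableOn (by norm_num)).differentiableAt (isOpen_Ioi.mem_nhds hx)
  have hcont : ∀ B : ℝ, 1 ≤ B → ContinuousOn σ2 (Set.Ici B) := fun B hB =>
    fun x hx => ((hdiff x (lt_of_lt_of_le (by linarith : (0:ℝ) < B) hx)).continuousAt).continuousWithinAt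
  have hnoanti : ∀ B : ℝ, 1 ≤ B → ¬ AntitoneOn σ2 (Set.Ici B) := by
    intro B hB hanti
    have h1 : (1:ℝ) < 2 ^ (2*α) :=
      Real.one_lt_rpow_iff_of_pos two_pos |>.mpr (Or.inl ⟨one_lt_two, by linarith⟩)
    have hev : ∀ᶠ u in atTop, (1:ℝ) < σ2 (u*2) / σ2 u :=
      hRV2.eventually (eventually_gt_nhds h1)
    obtain ⟨u, hu, huB⟩ := (hev.and (eventually_ge_atTop B)).exists
    have hu0 : 0 < u := lt_of_lt_of_le (by linarith) huB
    have hle : σ2 (u*2) ≤ σ2 u := hanti (by exact huB) (by simp only [Set.mem_Ici]; nlinarith) (by nlinarith)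
    have := (div_le_one (hpos u hu0)).mpr hle
    linarith
  obtain ⟨A, hA⟩ := hmon1
  rcases hA with hmono | hanti
  · by_cases hex : ∃ x, max A 1 ≤ x ∧ 0 ≤ deriv σ2 x
    · obtain ⟨x, hx, hx0⟩ := hex
      have hx1 : (1:ℝ) ≤ x := le_trans (le_max_right _ _) hx
      refine ⟨x, hx1, monotoneOn_of_deriv_nonneg (convex_Ici x) (hcont x hx1) ?_ ?_⟩
      · intro y hy
        rw [interior_Ici] at hy
        exact (hdiff y (by simp only [Set.mem_Ioi] at hy ⊢; linarith)).differentiableWithinAt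
      · intro y hy
        rw [interior_Ici] at hy
        simp only [Set.mem_Ioi] at hy
        have : deriv σ2 x ≤ deriv σ2 y :=
          hmono (le_trans (le_max_left _ _) hx) (le_trans (le_max_left _ _) (le_trans hx hy.le)) hy.le
        linarith
    · push_neg at hex
      exfalso
      refine hnoanti (max A 1) (le_max_right _ _) ?_
      refine antitoneOn_of_deriv_nonpos (convex_Ici _) (hcont _ (le_max_right _ _)) ?_ ?_
      · intro y hy
        rw [interior_Ici] at hy
        simp only [Set.mem_Ioi] at hy
        have h1y : (1:ℝ) < y := lt_of_le_of_lt (le_max_right _ _) hy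
        exact (hdiff y (by simp only [Set.mem_Ioi]; linarith)).differentiableWithinAt
      · intro y hy
        rw [interior_Ici] at hy
        simp only [Set.mem_Ioi] at hy
        exact (hex y hy.le).le
  · by_cases hex : ∃ x, max A 1 ≤ x ∧ deriv σ2 x ≤ 0
    · obtain ⟨x, hx, hx0⟩ := hex
      exfalso
      have hx1 : (1:ℝ) ≤ x := le_trans (le_max_right _ _) hx
      refine hnoanti x hx1 ?_
      refine antitoneOn_of_deriv_nonpos (convex_Ici _) (hcont x hx1) ?_ ?_
      · intro y hy
        rw [interior_Ici] at hy
        simp only [Set.mem_Ioi] at hy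
        exact (hdiff y (by simp only [Set.mem_Ioi]; linarith)).differentiableWithinAt
      · intro y hy
        rw [interior_Ici] at hy
        simp only [Set.mem_Ioi] at hy
        have : deriv σ2 y ≤ deriv σ2 x :=
          hanti (le_trans (le_max_left _ _) hx) (le_trans (le_max_left _ _) (le_trans hx hy.le)) hy.le
        linarith
    · push_neg at hex
      refine ⟨max A 1, le_max_right _ _, monotoneOn_of_deriv_nonneg (convex_Ici _)
        (hcont _ (le_max_right _ _)) ?_ ?_⟩
      · intro y hy
        rw [interior_Ici] at hy
        simp only [Set.mem_Ioi] at hy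
        have h1y : (1:ℝ) < y := lt_of_le_of_lt (le_max_right _ _) hy
        exact (hdiff y (by simp only [Set.mem_Ioi]; linarith)).differentiableWithinAt
      · intro y hy
        rw [interior_Ici] at hy
        simp only [Set.mem_Ioi] at hy
        exact (hex y hy.le).le

lemma aux_infty (σ2 : ℝ → ℝ) (α : ℝ) (hα : 0 < α)
    (hpos : ∀ t : ℝ, 0 < t → 0 < σ2 t)
    (hRV2 : Tendsto (fun u => σ2 (u*2) / σ2 u) atTop (nhds ((2:ℝ) ^ (2*α))))
    (A : ℝ) (hA : 1 ≤ A) (hmono : MonotoneOn σ2 (Set.Ici A)) :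
    Tendsto σ2 atTop atTop := by
  have h1 : (1:ℝ) < 2 ^ (2*α) :=
    Real.one_lt_rpow_iff_of_pos two_pos |>.mpr (Or.inl ⟨one_lt_two, by linarith⟩)
  set r : ℝ := (1 + 2 ^ (2*α))/2 with hr
  have hr1 : 1 < r := by rw [hr]; linarith
  have hrlt : r < 2 ^ (2*α) := by rw [hr]; linarith
  have hev : ∀ᶠ u in atTop, r < σ2 (u*2) / σ2 u := hRV2.eventually (eventually_gt_nhds hrlt)
  obtain ⟨V₀, hV₀⟩ := eventually_atTop.mp hev
  set V : ℝ := max V₀ A with hV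
  have hVA : A ≤ V := le_max_right _ _
  have hV1 : (1:ℝ) ≤ V := le_trans hA hVA
  have hstep : ∀ v, V ≤ v → r * σ2 v ≤ σ2 (v*2) := by
    intro v hv
    have hv0 : 0 < v := lt_of_lt_of_le (by linarith) hv
    have := hV₀ v (le_trans (le_max_left _ _) hv)
    have hσ := hpos v hv0
    rw [lt_div_iff₀ hσ] at this
    linarith
  have hiter : ∀ n : ℕ, r^n * σ2 V ≤ σ2 (V * 2^n) := by
    intro n
    induction n with
    | zero => simp
    | succ n ih =>
      have hVn : V ≤ V * 2^n := by nlinarith [one_le_pow₀ (by norm_num : (1:ℝ) ≤ 2) (n := n)]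
      have := hstep (V * 2^n) hVn
      have hr0 : (0:ℝ) ≤ r := by linarith
      calc r^(n+1) * σ2 V = r * (r^n * σ2 V) := by ring
        _ ≤ r * σ2 (V * 2^n) := by
            apply mul_le_mul_of_nonneg_left ih hr0
        _ ≤ σ2 (V * 2^n * 2) := this
        _ = σ2 (V * 2^(n+1)) := by ring_nf
  rw [tendsto_atTop]
  intro M
  have hrn : Tendsto (fun n : ℕ => r^n * σ2 V) atTop atTop :=
    (tendsto_pow_atTop_atTop_of_one_lt hr1).atTop_mul_const (hpos V (by linarith))
  obtain ⟨n, hn⟩ := (hrn.eventually (eventually_ge_atTop M)).exists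
  filter_upwards [eventually_ge_atTop (V * 2^n)] with u hu
  have hVn : A ≤ V * 2^n := by nlinarith [one_le_pow₀ (by norm_num : (1:ℝ) ≤ 2) (n := n)]
  have : σ2 (V * 2^n) ≤ σ2 u := hmono hVn (le_trans hVn hu) hu
  calc M ≤ r^n * σ2 V := hn
    _ ≤ σ2 (V * 2^n) := hiter n
    _ ≤ σ2 u := this

lemma aux_young (α : ℝ) (hα : 0 < α) (hα1 : α < 1) :
    ∀ x : ℝ, 0 < x → x ≠ 1 → x ^ α < (1-α) + α*x := by
  have key : ∀ x : ℝ, 0 < x → x ≠ 1 → 0 < (1-α) + α*x - x ^ α := by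
    set ψ : ℝ → ℝ := fun x => (1-α) + α*x - x ^ α with hψ
    have hψ1 : ψ 1 = 0 := by simp [hψ]
    have hd : ∀ x : ℝ, 0 < x → HasDerivAt ψ (α - α * x ^ (α-1)) x := by
      intro x hx
      have h1 : HasDerivAt (fun x : ℝ => x ^ α) (α * x ^ (α-1)) x :=
        Real.hasDerivAt_rpow_const (Or.inl hx.ne')
      have h2 : HasDerivAt (fun x : ℝ => (1-α) + α*x) α x := by
        simpa using ((hasDerivAt_id x).const_mul α).const_add (1-α)
      exact h2.sub h1
    have hcont : ContinuousOn ψ (Set.Ici 0) := by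
      intro x hx
      refine (ContinuousWithinAt.sub ?_ ?_)
      · exact (continuous_const.add (continuous_const.mul continuous_id)).continuousWithinAt
      · exact (Real.continuousAt_rpow_const x α (Or.inr hα.le)).continuousWithinAt
    intro x hx hx1
    rcases lt_or_gt_of_ne hx1 with h | h
    · have hanti : StrictAntiOn ψ (Set.Icc 0 1) := by
        refine strictAntiOn_of_deriv_neg (convex_Icc 0 1) (hcont.mono Set.Icc_subset_Ici_self) ?_
        intro y hy
        rw [interior_Icc] at hy
        obtain ⟨hy0, hy1⟩ := hy
        rw [(hd y hy0).deriv]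
        have : 1 < y ^ (α-1) :=
          Real.one_lt_rpow_iff_of_pos hy0 |>.mpr (Or.inr ⟨hy1, by linarith⟩)
        nlinarith
      have := hanti ⟨hx.le, h.le⟩ ⟨by norm_num, le_refl 1⟩ h
      rw [hψ1] at this
      exact this
    · have hmono : StrictMonoOn ψ (Set.Ici 1) := by
        refine strictMonoOn_of_deriv_pos (convex_Ici 1) (hcont.mono ?_) ?_
        · intro y hy; simp only [Set.mem_Ici] at hy ⊢; linarith
        · intro y hy
          rw [interior_Ici] at hy
          simp only [Set.mem_Ioi] at hy
          rw [(hd y (by linarith)).deriv]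
          have : y ^ (α-1) < 1 := by
            apply Real.rpow_lt_one_of_one_lt_of_neg hy (by linarith)
          nlinarith
      have := hmono (Set.mem_Ici.mpr (le_refl 1)) (Set.mem_Ici.mpr h.le) h
      rw [hψ1] at this
      exact this
  intro x hx hx1
  have := key x hx hx1
  linarith

set_option maxHeartbeats 1000000 in
lemma aux_exclusion (σ2 : ℝ → ℝ) (α c : ℝ) (tu : ℝ → ℝ)
    (hα : 0 < α) (hα1 : α < 1) (hc : 0 < c)
    (hpos : ∀ t : ℝ, 0 < t → 0 < σ2 t)
    (hRV : ∀ t : ℝ, 0 < t →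
      Tendsto (fun u => σ2 (u * t) / σ2 u) atTop (nhds (t ^ (2 * α))))
    (A : ℝ) (hA : 1 ≤ A) (hmono : MonotoneOn σ2 (Set.Ici A))
    (htu : ∀ᶠ u in atTop, 0 < tu u ∧
      ∀ t : ℝ, 0 < t →
        u * (1 + c * tu u) / Real.sqrt (σ2 (u * tu u))
          ≤ u * (1 + c * t) / Real.sqrt (σ2 (u * t)))
    (tstar : ℝ) (htstar : 0 < tstar)
    (s₁ s₂ : ℝ) (h1 : 0 < s₁) (h12 : s₁ ≤ s₂)
    (hlt : (s₂/tstar) ^ (2*α) < ((1+c*s₁)/(1+c*tstar))^2) :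
    ∀ᶠ u in atTop, tu u ∉ Set.Icc s₁ s₂ := by
  have hr := aux_ratio σ2 α hpos hRV s₂ tstar (by linarith) htstar
  have hev : ∀ᶠ u in atTop, σ2 (u*s₂) / σ2 (u*tstar) < ((1+c*s₁)/(1+c*tstar))^2 :=
    hr.eventually (eventually_lt_nhds hlt)
  filter_upwards [htu, hev, eventually_ge_atTop (max 1 (A/s₁))] with u hu hru huA
  obtain ⟨htu0, hmin⟩ := hu
  rintro ⟨hlo, hhi⟩
  have hu1 : (1:ℝ) ≤ u := le_trans (le_max_left _ _) huA
  have hu0 : 0 < u := by linarith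
  have hus1 : A ≤ u * s₁ := by
    have : A/s₁ ≤ u := le_trans (le_max_right _ _) huA
    calc A = (A/s₁) * s₁ := by field_simp
      _ ≤ u * s₁ := by nlinarith
  have hutuA : A ≤ u * tu u := le_trans hus1 (by nlinarith)
  have hus2A : A ≤ u * s₂ := le_trans hus1 (by nlinarith)
  have hσtu : 0 < σ2 (u * tu u) := hpos _ (by nlinarith)
  have hσts : 0 < σ2 (u * tstar) := hpos _ (by positivity)
  have hσs2 : 0 < σ2 (u * s₂) := hpos _ (by nlinarith)
  have hkey := aux_key σ2 c u (tu u) tstar hc hu0 htu0 htstar hσtu hσts (hmin tstar htstar)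
  have hmle : σ2 (u * tu u) ≤ σ2 (u * s₂) := hmono hutuA hus2A (by nlinarith)
  have hs1tu : (1 + c*s₁)^2 ≤ (1 + c*tu u)^2 := by
    have h' : 1 + c*s₁ ≤ 1 + c*tu u := by nlinarith
    exact pow_le_pow_left₀ (by positivity) h' 2
  have hchain : (1 + c*s₁)^2 * σ2 (u*tstar) ≤ (1 + c*tstar)^2 * σ2 (u*s₂) := by
    calc (1 + c*s₁)^2 * σ2 (u*tstar) ≤ (1 + c*tu u)^2 * σ2 (u*tstar) :=
          mul_le_mul_of_nonneg_right hs1tu hσts.le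
      _ ≤ (1 + c*tstar)^2 * σ2 (u*tu u) := hkey
      _ ≤ (1 + c*tstar)^2 * σ2 (u*s₂) := by nlinarith
  rw [div_pow, div_lt_div_iff₀ hσts (by positivity : (0:ℝ) < (1+c*tstar)^2)] at hru
  nlinarith [hru, hchain]

set_option maxHeartbeats 2000000 in
/-- If `σ²` is regularly varying at `∞` with index `2α`, `α ∈ (0,1)`, twice continuously
differentiable on `(0,∞)` with ultimately monotone derivatives, then for `c > 0` the
minimizer `t_u` of `t ↦ u(1+ct)/σ(ut)` over `t > 0` converges to
`t* = α/(c(1−α))` as `u → ∞`. -/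
theorem minimizer_convergence
    (σ2 : ℝ → ℝ) (α c : ℝ) (hα : 0 < α) (hα1 : α < 1) (hc : 0 < c)
    (hpos : ∀ t : ℝ, 0 < t → 0 < σ2 t)
    (hRV : ∀ t : ℝ, 0 < t →
      Tendsto (fun u => σ2 (u * t) / σ2 u) atTop (nhds (t ^ (2 * α))))
    (hC2 : ContDiffOn ℝ 2 σ2 (Set.Ioi 0))
    (hmon1 : UltimatelyMonotone (deriv σ2))
    (hmon2 : UltimatelyMonotone (deriv (deriv σ2)))
    (tu : ℝ → ℝ)
    (htu : ∀ᶠ u in atTop, 0 < tu u ∧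
      ∀ t : ℝ, 0 < t →
        u * (1 + c * tu u) / Real.sqrt (σ2 (u * tu u))
          ≤ u * (1 + c * t) / Real.sqrt (σ2 (u * t))) :
    Tendsto tu atTop (nhds (α / (c * (1 - α)))) := by
  have h1α : 0 < 1 - α := by linarith
  set tstar : ℝ := α / (c * (1 - α)) with htstar_def
  have htstar : 0 < tstar := div_pos hα (by positivity)
  have hct : 0 < 1 + c*tstar := by positivity
  have hRV2 : Tendsto (fun u => σ2 (u*2) / σ2 u) atTop (nhds ((2:ℝ) ^ (2*α))) := hRV 2 two_pos
  obtain ⟨A, hA1, hmono⟩ := aux_mono σ2 α hα hpos hRV2 hC2 hmon1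
  have hinf := aux_infty σ2 α hα hpos hRV2 A hA1 hmono
  set θ : ℝ := (2:ℝ)^α with hθdef
  have hθ1 : 1 < θ := Real.one_lt_rpow_iff_of_pos two_pos |>.mpr (Or.inl ⟨one_lt_two, hα⟩)
  have hθ2 : θ < 2 := by
    have := Real.rpow_lt_rpow_of_exponent_lt one_lt_two hα1
    rwa [Real.rpow_one] at this
  have hθsq : (2:ℝ)^(2*α) = θ^2 := aux_sq_rpow α (by norm_num)
  -- ######## Upper bound ########
  set T₀ : ℝ := max (tstar+1) ((2/c)/(2-θ)) with hT0def
  have hT₀gt : tstar < T₀ := lt_of_lt_of_le (by linarith) (le_max_left _ _)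
  have hT₀pos : 0 < T₀ := lt_trans htstar hT₀gt
  have hTkey : ∀ t, T₀ ≤ t → θ * (1 + c*t/2) < 1 + c*t := by
    intro t ht
    have h2 : (2/c)/(2-θ) ≤ t := le_trans (le_max_right _ _) ht
    have h3 : 2 ≤ (2-θ) * (c*t) := by
      rw [div_div, div_le_iff₀ (by nlinarith : (0:ℝ) < c*(2-θ))] at h2
      nlinarith
    nlinarith
  set g : ℝ := (1+c*T₀)/(1+c*T₀/2) with hgdef
  have hcT2 : (0:ℝ) < 1 + c*T₀/2 := by positivity
  have hgθ : θ < g := by rw [hgdef, lt_div_iff₀ hcT2]; exact hTkey T₀ le_rfl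
  have hθ0 : 0 < θ := by linarith
  have hT₀ev : ∀ᶠ u in atTop, tu u < T₀ := by
    have hlim2 : (2:ℝ)^(2*α) < θ*g := by rw [hθsq]; nlinarith
    obtain ⟨V, hV⟩ := eventually_atTop.mp (hRV2.eventually (eventually_lt_nhds hlim2))
    filter_upwards [htu, eventually_ge_atTop (max 1 (2*(max V 1)/T₀))] with u hu hMx
    obtain ⟨htu0, hmin⟩ := hu
    by_contra hcon
    push_neg at hcon
    have hu1 : (1:ℝ) ≤ u := le_trans (le_max_left _ _) hMx
    have hu0 : (0:ℝ) < u := by linarith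
    have hvge : max V 1 ≤ u*(tu u/2) := by
      have h2' : 2*(max V 1)/T₀ ≤ u := le_trans (le_max_right _ _) hMx
      rw [div_le_iff₀ hT₀pos] at h2'
      nlinarith
    have hv0 : 0 < u*(tu u/2) := lt_of_lt_of_le (lt_of_lt_of_le one_pos (le_max_right _ _)) hvge
    have hσv : 0 < σ2 (u*(tu u/2)) := hpos _ hv0
    have hσ2v : 0 < σ2 (u*tu u) := hpos _ (by nlinarith)
    have hb : 0 < tu u/2 := by nlinarith
    have hkey := aux_key σ2 c u (tu u) (tu u/2) hc hu0 htu0 hb hσ2v hσv (hmin _ hb)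
    have hratio := hV (u*(tu u/2)) (le_trans (le_max_left _ _) hvge)
    rw [div_lt_iff₀ hσv] at hratio
    have heq : (u*(tu u/2))*2 = u*tu u := by ring
    rw [heq] at hratio
    have htk := hTkey (tu u) hcon
    have hgm : g*(1+c*(tu u/2)) ≤ 1+c*tu u := by
      rw [hgdef, div_mul_eq_mul_div, div_le_iff₀ hcT2]
      nlinarith
    have hQ : (0:ℝ) < 1 + c*(tu u/2) := by positivity
    have hP : (0:ℝ) < 1 + c*tu u := by positivity
    have hstep1 : θ*g*(1+c*(tu u/2))^2 < (1+c*tu u)^2 := by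
      nlinarith [htk, hgm, hQ, hP, mul_pos hQ hP, mul_pos hθ0 hQ]
    have e1 := mul_lt_mul_of_pos_left hratio (by positivity : (0:ℝ) < (1+c*(tu u/2))^2)
    have e2 := mul_lt_mul_of_pos_right hstep1 hσv
    nlinarith [hkey, e1, e2]
  -- ######## u * tu u → ∞ ########
  have hutu : Tendsto (fun u => u * tu u) atTop atTop := by
    have hστ : Tendsto (fun u => σ2 (u*tstar)) atTop atTop :=
      hinf.comp (Tendsto.atTop_mul_const htstar tendsto_id)
    have hlow : ∀ᶠ u in atTop, σ2 (u*tstar) / (1+c*tstar)^2 ≤ σ2 (u * tu u) := by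
      filter_upwards [htu, eventually_ge_atTop 1] with u hu hu1
      obtain ⟨htu0, hmin⟩ := hu
      have hu0 : (0:ℝ) < u := by linarith
      have hσtu := hpos (u*tu u) (mul_pos hu0 htu0)
      have hσts := hpos (u*tstar) (mul_pos hu0 htstar)
      have hkey := aux_key σ2 c u (tu u) tstar hc hu0 htu0 htstar hσtu hσts (hmin tstar htstar)
      rw [div_le_iff₀ (by positivity : (0:ℝ) < (1+c*tstar)^2)]
      have h1 : 1 ≤ (1+c*tu u)^2 := by nlinarith [mul_pos hc htu0]
      nlinarith [hkey, hσts, h1]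
    have hσtu_inf : Tendsto (fun u => σ2 (u * tu u)) atTop atTop :=
      tendsto_atTop_mono' atTop hlow (hστ.atTop_div_const (by positivity))
    rw [tendsto_atTop]
    intro V
    obtain ⟨u₁, ⟨h10, h1min⟩, hu₁ge⟩ := (htu.and (eventually_ge_atTop (max V 1))).exists
    have hu₁1 : (1:ℝ) ≤ u₁ := le_trans (le_max_right _ _) hu₁ge
    have hu₁0 : (0:ℝ) < u₁ := by linarith
    set M : ℝ := (1+c)^2 * σ2 (u₁ * tu u₁) with hM
    have hbound : ∀ s, 0 < s → s ≤ u₁ → σ2 s ≤ M := by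
      intro s hs hsu
      have hb : 0 < s/u₁ := by positivity
      have hσa := hpos _ (mul_pos hu₁0 h10)
      have heq : u₁ * (s/u₁) = s := by field_simp
      have hσb : 0 < σ2 (u₁ * (s/u₁)) := by rw [heq]; exact hpos s hs
      have hkey := aux_key σ2 c u₁ (tu u₁) (s/u₁) hc hu₁0 h10 hb hσa hσb (h1min _ hb)
      rw [heq] at hkey
      have hs1 : s/u₁ ≤ 1 := by rw [div_le_one hu₁0]; exact hsu
      have h1le : 1 ≤ (1 + c*tu u₁)^2 := by nlinarith [mul_pos hc h10]
      have h2le : (1 + c*(s/u₁))^2 ≤ (1+c)^2 := by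
        have hx2 : (s/u₁)^2 ≤ 1 := by nlinarith
        have e1 : c*(s/u₁) ≤ c := by nlinarith
        have e2 : c^2*(s/u₁)^2 ≤ c^2 := by nlinarith [hx2, sq_nonneg c]
        nlinarith [e1, e2]
      nlinarith [hkey, hpos s hs, hσa]
    filter_upwards [htu, hσtu_inf.eventually (eventually_gt_atTop M), eventually_ge_atTop 1]
      with u hu hM' hu1
    obtain ⟨htu0, _⟩ := hu
    by_contra hcon
    push_neg at hcon
    have hu0 : (0:ℝ) < u := by linarith
    have : σ2 (u * tu u) ≤ M :=
      hbound _ (by positivity) (le_trans hcon.le (le_trans (le_max_left _ _) hu₁ge))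
    linarith
  -- ######## Lower bound ########
  set t₀ : ℝ := (θ-1)/(2*c*(2-θ)) with ht₀def
  have ht₀pos : 0 < t₀ := div_pos (by linarith) (by nlinarith)
  have h2θ : (0:ℝ) < 2-θ := by linarith
  have hct₀ : 2*(2-θ)*(c*t₀) = θ-1 := by
    have hne : (2*c*(2-θ)) ≠ 0 := ne_of_gt (by positivity)
    rw [ht₀def]
    field_simp
  have hLkey : ∀ t, 0 < t → t ≤ t₀ → 1 + 2*c*t < θ*(1+c*t) := by
    intro t ht hle
    nlinarith [hct₀, hθ1, hθ2, hc, mul_pos hc ht]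
  have ht₀ev : ∀ᶠ u in atTop, t₀ < tu u := by
    have hq : (0:ℝ) < 1 + c*t₀ := by positivity
    have hlim2 : ((1+2*c*t₀)/(1+c*t₀))^2 < (2:ℝ)^(2*α) := by
      rw [hθsq, div_pow, div_lt_iff₀ (by positivity : (0:ℝ) < (1+c*t₀)^2)]
      have h := hLkey t₀ ht₀pos le_rfl
      nlinarith [mul_pos hc ht₀pos]
    obtain ⟨V, hV⟩ := eventually_atTop.mp (hRV2.eventually (eventually_gt_nhds hlim2))
    filter_upwards [htu, hutu.eventually (eventually_ge_atTop (max V 1)), eventually_ge_atTop 1]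
      with u hu hVle hu1
    obtain ⟨htu0, hmin⟩ := hu
    by_contra hcon
    push_neg at hcon
    have hu0 : (0:ℝ) < u := by linarith
    have hb : 0 < 2*tu u := by linarith
    have hσtu : 0 < σ2 (u*tu u) := hpos _ (by positivity)
    have hσ2tu : 0 < σ2 (u*(2*tu u)) := hpos _ (by positivity)
    have hkey := aux_key σ2 c u (tu u) (2*tu u) hc hu0 htu0 hb hσtu hσ2tu (hmin _ hb)
    have hratio := hV (u*tu u) (le_trans (le_max_left _ _) hVle)
    have heq : u*(2*tu u) = (u*tu u)*2 := by ring
    rw [heq] at hkey hσ2tu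
    rw [div_pow, div_lt_div_iff₀ (by positivity : (0:ℝ) < (1+c*t₀)^2) hσtu] at hratio
    have hmcomp : (1+c*(2*tu u))*(1+c*t₀) ≤ (1+2*c*t₀)*(1+c*tu u) := by nlinarith
    have hP : (0:ℝ) < 1 + c*tu u := by positivity
    have hsq : ((1+c*(2*tu u))*(1+c*t₀))^2 ≤ ((1+2*c*t₀)*(1+c*tu u))^2 :=
      pow_le_pow_left₀ (by positivity) hmcomp 2
    have e1 := mul_le_mul_of_nonneg_right hkey (by positivity : (0:ℝ) ≤ (1+c*t₀)^2)
    have e2 := mul_le_mul_of_nonneg_right hsq hσtu.le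
    have e3 := mul_lt_mul_of_pos_right hratio (by positivity : (0:ℝ) < (1+c*tu u)^2)
    nlinarith [e1, e2, e3, hσ2tu, hσtu]
  -- ######## Final ε-argument ########
  rw [Metric.tendsto_nhds]
  intro ε hε
  set K : Set ℝ := Set.Icc t₀ (tstar-ε) ∪ Set.Icc (tstar+ε) T₀ with hK
  have hKmem : ∀ s ∈ K, 0 < s ∧ s ≠ tstar := by
    intro s hs
    rcases hs with ⟨h1, h2⟩ | ⟨h1, h2⟩
    · exact ⟨lt_of_lt_of_le ht₀pos h1, by intro h; rw [h] at h2; linarith⟩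
    · exact ⟨by linarith, by intro h; rw [h] at h1; linarith⟩
  have hyoung : ∀ s, 0 < s → s ≠ tstar → (s/tstar)^(2*α) < ((1+c*s)/(1+c*tstar))^2 := by
    intro s hs hsne
    have hx : 0 < s/tstar := by positivity
    have hx1 : s/tstar ≠ 1 := by
      intro h
      rw [div_eq_one_iff_eq (ne_of_gt htstar)] at h
      exact hsne h
    have hY := aux_young α hα hα1 _ hx hx1
    have hval : (1-α) + α*(s/tstar) = (1+c*s)/(1+c*tstar) := by
      rw [htstar_def]
      have hcne : c ≠ 0 := ne_of_gt hc
      have h1 : (1:ℝ) - α ≠ 0 := ne_of_gt h1α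
      field_simp
      ring
    rw [aux_sq_rpow α hx.le]
    rw [hval] at hY
    have hr0 : (0:ℝ) ≤ (s/tstar)^α := Real.rpow_nonneg hx.le _
    nlinarith [hY, hr0]
  have hpoint : ∀ s ∈ K, ∃ η, 0 < η ∧ η < s ∧ (∀ᶠ u in atTop, tu u ∉ Set.Icc (s-η) (s+η)) := by
    intro s hs
    obtain ⟨hs0, hsne⟩ := hKmem s hs
    set F : ℝ → ℝ := fun η => ((1+c*(s-η))/(1+c*tstar))^2 - ((s+η)/tstar)^(2*α) with hF
    have hF0 : 0 < F 0 := by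
      have := hyoung s hs0 hsne
      simp only [hF, sub_zero, add_zero]
      linarith
    have hFc : ContinuousAt F 0 := by
      apply ContinuousAt.sub
      · exact (((continuous_const.add (continuous_const.mul (continuous_const.sub continuous_id))).div_const _).pow 2).continuousAt
      · apply ContinuousAt.rpow_const
        · exact ((continuous_const.add continuous_id).div_const _).continuousAt
        · left
          simp only [add_zero]
          positivity
    have hev : ∀ᶠ η in nhds (0:ℝ), 0 < F η ∧ η < s :=
      (hFc.eventually (eventually_gt_nhds hF0)).and (eventually_lt_nhds hs0)
    obtain ⟨δ, hδ0, hδ⟩ := Metric.eventually_nhds_iff.mp hev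
    have hδ2 : |δ/2 - 0| < δ := by rw [sub_zero, abs_of_pos (by linarith)]; linarith
    obtain ⟨hFδ, hδs⟩ := hδ (by simpa [Real.dist_eq] using hδ2)
    refine ⟨δ/2, by linarith, hδs, ?_⟩
    exact aux_exclusion σ2 α c tu hα hα1 hc hpos hRV A hA1 hmono htu tstar htstar
      (s - δ/2) (s + δ/2) (by linarith) (by linarith) (by simp only [hF] at hFδ; linarith)
  choose! η hη0 hηs hηev using hpoint
  have hKcomp : IsCompact K := (isCompact_Icc).union isCompact_Icc
  obtain ⟨FS, hFS, hcover⟩ := hKcomp.elim_nhds_subcover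
    (fun x => Set.Ioo (x - η x) (x + η x))
    (fun x hx => Ioo_mem_nhds (by linarith [hη0 x hx]) (by linarith [hη0 x hx]))
  have hevall : ∀ᶠ u in atTop, ∀ x ∈ FS, tu u ∉ Set.Icc (x - η x) (x + η x) := by
    rw [Filter.eventually_all_finset]
    intro x hx
    exact hηev x (hFS x hx)
  filter_upwards [hevall, ht₀ev, hT₀ev, htu] with u hall ht₀u hT₀u hu
  have hnotK : tu u ∉ K := by
    intro hmem
    obtain ⟨x, hxFS, hxmem⟩ := Set.mem_iUnion₂.mp (hcover hmem)
    exact hall x hxFS ⟨hxmem.1.le, hxmem.2.le⟩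
  rw [Real.dist_eq, abs_sub_lt_iff]
  constructor
  · -- tu u - tstar < ε
    by_contra hcon
    push_neg at hcon
    have h1 : tstar + ε ≤ tu u := by linarith
    exact hnotK (Or.inr ⟨h1, hT₀u.le⟩)
  · -- tstar - tu u < ε
    by_contra hcon
    push_neg at hcon
    have h1 : tu u ≤ tstar - ε := by linarith
    exact hnotK (Or.inl ⟨ht₀u.le, h1⟩)
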